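/- Let A, B ∈ ℝ^{n×n} with B invertible and AB = BA. Then the following are equivalent: (i) there exists a symmetric positive definite matrix P ∈ ℝ^{n×n} such that (A − 2BAB⁻¹)ᵀP + P(A − 2BAB⁻¹) is negative definite; (ii) there exist a symmetric positive definite matrix P ∈ ℝ^{n×n}, a symmetric positive definite matrix T ∈ ℝ^{n×n}, and a scalar β > 0 such that the 2n×2n symmetric block matrix [[AᵀP + PA + T − (4/β)AᵀB⁻ᵀB⁻¹A, PB − (2/β)AᵀB⁻ᵀ], [BᵀP − (2/β)B⁻¹A, −(1/β)I]] is negative semidefinite. -/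

import Mathlib

open Matrix

private lemma dot_transpose {n : ℕ} (M : Matrix (Fin n) (Fin n) ℝ) (v w : Fin n → ℝ) :
    v ⬝ᵥ (Mᵀ *ᵥ w) = (M *ᵥ v) ⬝ᵥ w := by
  rw [dotProduct_mulVec, vecMul_transpose]

private lemma dot_self_nonneg {n : ℕ} (v : Fin n → ℝ) : 0 ≤ v ⬝ᵥ v :=
  Finset.sum_nonneg fun i _ => mul_self_nonneg _

/-- Key algebraic identity: quadratic form of the block matrix. -/
private lemma key_identity {n : ℕ} (A B P T : Matrix (Fin n) (Fin n) ℝ) {β : ℝ} (hβ : β ≠ 0)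
    (hP : Pᵀ = P) (hBC : B * (B⁻¹ * A) = A) (x u : Fin n → ℝ) :
    (Sum.elim x u) ⬝ᵥ ((Matrix.fromBlocks
        (Aᵀ * P + P * A + T - (4 / β) • (Aᵀ * B⁻¹ᵀ * B⁻¹ * A))
        (P * B - (2 / β) • (Aᵀ * B⁻¹ᵀ))
        (Bᵀ * P - (2 / β) • (B⁻¹ * A))
        (-((1 / β) • (1 : Matrix (Fin n) (Fin n) ℝ)))) *ᵥ (Sum.elim x u))
    = x ⬝ᵥ ((T - (Aᵀ * P + P * A) + β • (P * B * (Bᵀ * P))) *ᵥ x)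
      - β⁻¹ * ((((2:ℝ) • (B⁻¹ * A) - β • (Bᵀ * P)) *ᵥ x + u) ⬝ᵥ
               (((2:ℝ) • (B⁻¹ * A) - β • (Bᵀ * P)) *ᵥ x + u)) := by
  set D : Matrix (Fin n) (Fin n) ℝ := (2:ℝ) • (B⁻¹ * A) - β • (Bᵀ * P) with hD
  set X : Matrix (Fin n) (Fin n) ℝ := T - (Aᵀ * P + P * A) + β • (P * B * (Bᵀ * P)) with hX
  have h1 : Aᵀ * B⁻¹ᵀ * Bᵀ = Aᵀ := by
    calc Aᵀ * B⁻¹ᵀ * Bᵀ = (B * (B⁻¹ * A))ᵀ := by simp [transpose_mul, mul_assoc]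
    _ = Aᵀ := by rw [hBC]
  have e11 : Aᵀ * P + P * A + T - (4 / β) • (Aᵀ * B⁻¹ᵀ * B⁻¹ * A) = X - β⁻¹ • (Dᵀ * D) := by
    rw [hX, hD]
    simp only [transpose_sub, transpose_smul, transpose_mul, transpose_transpose, hP]
    simp only [sub_mul, mul_sub, smul_mul_assoc, mul_smul_comm, smul_smul, ← mul_assoc]
    rw [show Aᵀ * B⁻¹ᵀ * Bᵀ * P = Aᵀ * P from by rw [h1],
        show P * B * B⁻¹ * A = P * A from by rw [mul_assoc (P*B), mul_assoc P B, hBC]]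
    match_scalars
    all_goals (field_simp; try ring)
    all_goals norm_num
  have e12 : P * B - (2 / β) • (Aᵀ * B⁻¹ᵀ) = 0 - β⁻¹ • Dᵀ := by
    rw [hD]
    simp only [transpose_sub, transpose_smul, transpose_mul, transpose_transpose, hP]
    match_scalars <;> field_simp
  have e21 : Bᵀ * P - (2 / β) • (B⁻¹ * A) = 0 - β⁻¹ • D := by
    rw [hD]; match_scalars <;> field_simp
  have e22 : -((1 / β) • (1 : Matrix (Fin n) (Fin n) ℝ)) =
      (0 : Matrix (Fin n) (Fin n) ℝ) - β⁻¹ • 1 := by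
    simp [one_div]
  rw [e11, e12, e21, e22, fromBlocks_mulVec, sumElim_dotProduct_sumElim]
  simp only [sub_mulVec, neg_mulVec, smul_mulVec, zero_mulVec, one_mulVec,
    ← mulVec_mulVec, dotProduct_add, add_dotProduct, dotProduct_sub, sub_dotProduct,
    dotProduct_smul, smul_dotProduct, smul_eq_mul, zero_sub, dotProduct_neg, neg_dotProduct,
    zero_dotProduct, Sum.elim_comp_inl, Sum.elim_comp_inr, dot_transpose]
  rw [dotProduct_comm u (D *ᵥ x)]
  ring

private lemma quad_continuous {n : ℕ} (M : Matrix (Fin n) (Fin n) ℝ) :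
    Continuous fun x : Fin n → ℝ => x ⬝ᵥ (M *ᵥ x) := by
  have : (fun x : Fin n → ℝ => x ⬝ᵥ (M *ᵥ x))
      = fun x => ∑ i, x i * ∑ j, M i j * x j := rfl
  rw [this]
  exact continuous_finset_sum _ fun i _ =>
    (continuous_apply i).mul (continuous_finset_sum _ fun j _ =>
      continuous_const.mul (continuous_apply j))

private lemma quad_smul {n : ℕ} (M : Matrix (Fin n) (Fin n) ℝ) (c : ℝ) (y : Fin n → ℝ) :
    (c • y) ⬝ᵥ (M *ᵥ (c • y)) = c * c * (y ⬝ᵥ (M *ᵥ y)) := by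
  rw [mulVec_smul, smul_dotProduct, dotProduct_smul, smul_eq_mul, smul_eq_mul]
  ring

/-- small `β` exists making a PSD form dominated by a PD form -/
private lemma exists_beta {n : ℕ} (S N : Matrix (Fin n) (Fin n) ℝ)
    (hS : ∀ x : Fin n → ℝ, x ≠ 0 → 0 < x ⬝ᵥ (S *ᵥ x))
    (hN : ∀ x : Fin n → ℝ, 0 ≤ x ⬝ᵥ (N *ᵥ x)) :
    ∃ β : ℝ, 0 < β ∧ ∀ x : Fin n → ℝ, β * (x ⬝ᵥ (N *ᵥ x)) ≤ x ⬝ᵥ (S *ᵥ x) := by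
  rcases Nat.eq_zero_or_pos n with hn | hn
  · subst hn
    refine ⟨1, one_pos, fun x => ?_⟩
    have hx : x = 0 := funext fun i => absurd i.2 (by simp)
    subst hx
    simp
  · haveI : Nonempty (Fin n) := ⟨⟨0, hn⟩⟩
    obtain ⟨a, haS, hamin⟩ := (isCompact_sphere (0 : Fin n → ℝ) 1).exists_isMinOn
      (NormedSpace.sphere_nonempty.mpr zero_le_one) (quad_continuous S).continuousOn
    obtain ⟨b, hbS, hbmax⟩ := (isCompact_sphere (0 : Fin n → ℝ) 1).exists_isMaxOn
      (NormedSpace.sphere_nonempty.mpr zero_le_one) (quad_continuous N).continuousOn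
    have ha0 : a ≠ 0 := by
      rw [mem_sphere_zero_iff_norm] at haS
      intro h; rw [h] at haS; simp at haS
    set m : ℝ := a ⬝ᵥ (S *ᵥ a) with hm
    set K : ℝ := b ⬝ᵥ (N *ᵥ b) with hK
    have hmpos : 0 < m := hS a ha0
    have hKnn : 0 ≤ K := hN b
    refine ⟨m / (K + 1), div_pos hmpos (by linarith), fun x => ?_⟩
    by_cases hx : x = 0
    · subst hx; simp
    · set y : Fin n → ℝ := ‖x‖⁻¹ • x with hy
      have hxnorm : ‖x‖ ≠ 0 := norm_ne_zero_iff.mpr hx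
      have hyS : y ∈ Metric.sphere (0 : Fin n → ℝ) 1 := by
        rw [mem_sphere_zero_iff_norm, hy, norm_smul]
        simp [abs_of_nonneg (inv_nonneg.mpr (norm_nonneg x)), inv_mul_cancel₀ hxnorm]
      have hxy : x = ‖x‖ • y := (smul_inv_smul₀ hxnorm x).symm
      have hSx : x ⬝ᵥ (S *ᵥ x) = ‖x‖ * ‖x‖ * (y ⬝ᵥ (S *ᵥ y)) := by
        rw [hxy, quad_smul]; rw [← hxy]
      have hNx : x ⬝ᵥ (N *ᵥ x) = ‖x‖ * ‖x‖ * (y ⬝ᵥ (N *ᵥ y)) := by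
        rw [hxy, quad_smul]; rw [← hxy]
      have h1 : m ≤ y ⬝ᵥ (S *ᵥ y) := (isMinOn_iff.mp hamin) y hyS
      have h2 : y ⬝ᵥ (N *ᵥ y) ≤ K := (isMaxOn_iff.mp hbmax) y hyS
      have h3 : 0 ≤ y ⬝ᵥ (N *ᵥ y) := hN y
      have hc2 : 0 ≤ ‖x‖ * ‖x‖ := mul_self_nonneg _
      rw [hSx, hNx]
      have hstep : m / (K + 1) * (y ⬝ᵥ (N *ᵥ y)) ≤ m := by
        rw [div_mul_eq_mul_div, div_le_iff₀ (by linarith)]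
        nlinarith
      calc m / (K + 1) * (‖x‖ * ‖x‖ * (y ⬝ᵥ (N *ᵥ y)))
          = ‖x‖ * ‖x‖ * (m / (K + 1) * (y ⬝ᵥ (N *ᵥ y))) := by ring
        _ ≤ ‖x‖ * ‖x‖ * m := by
            exact mul_le_mul_of_nonneg_left hstep hc2
        _ ≤ ‖x‖ * ‖x‖ * (y ⬝ᵥ (S *ᵥ y)) := mul_le_mul_of_nonneg_left h1 hc2


/-- For `A`, `B` with `B` invertible and `AB = BA`, the following
are equivalent: (i) there is a symmetric positive definite `P` with
`(A − 2BAB⁻¹)ᵀP + P(A − 2BAB⁻¹)` negative definite (asymptotic stability under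
the output feedback `u = −2Ay`); (ii) there are symmetric positive definite
`P`, `T` and `β > 0` such that the block matrix
`[[AᵀP + PA + T − (4/β)AᵀB⁻ᵀB⁻¹A, PB − (2/β)AᵀB⁻ᵀ], [BᵀP − (2/β)B⁻¹A, −(1/β)I]]`
is negative semidefinite (strict (Q,S,R)-dissipativity with
`Q = (4/β)I, S = −(2/β)I, R = (1/β)I`). -/
theorem asympStable_iff_strictlyDissipative {n : ℕ}
    (A B : Matrix (Fin n) (Fin n) ℝ)
    (hB : IsUnit B.det)
    (hAB : A * B = B * A) :
    (∃ P : Matrix (Fin n) (Fin n) ℝ, P.PosDef ∧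
      ∀ z : Fin n → ℝ, z ≠ 0 →
        z ⬝ᵥ (((A - 2 • (B * A * B⁻¹))ᵀ * P + P * (A - 2 • (B * A * B⁻¹))) *ᵥ z) < 0)
    ↔ (∃ (P T : Matrix (Fin n) (Fin n) ℝ) (β : ℝ), P.PosDef ∧ T.PosDef ∧ 0 < β ∧
        ∀ z : Fin n ⊕ Fin n → ℝ,
          z ⬝ᵥ ((Matrix.fromBlocks
              (Aᵀ * P + P * A + T - (4 / β) • (Aᵀ * B⁻¹ᵀ * B⁻¹ * A))
              (P * B - (2 / β) • (Aᵀ * B⁻¹ᵀ))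
              (Bᵀ * P - (2 / β) • (B⁻¹ * A))
              (-((1 / β) • (1 : Matrix (Fin n) (Fin n) ℝ)))) *ᵥ z) ≤ 0) := by
  have hBB : B * B⁻¹ = 1 := mul_nonsing_inv B hB
  have hBC : B * (B⁻¹ * A) = A := by rw [← mul_assoc, hBB, one_mul]
  have hBA : B * A * B⁻¹ = A := by rw [← hAB, mul_assoc, hBB, mul_one]
  have hneg : ∀ P : Matrix (Fin n) (Fin n) ℝ,
      (A - 2 • (B * A * B⁻¹))ᵀ * P + P * (A - 2 • (B * A * B⁻¹)) = -(Aᵀ * P + P * A) := by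
    intro P
    rw [hBA, show A - 2 • A = -A from by rw [two_smul]; abel]
    rw [transpose_neg, Matrix.neg_mul, Matrix.mul_neg, neg_add]
  constructor
  · rintro ⟨P, hP, hstab⟩
    have hPt : Pᵀ = P := by
      rw [← conjTranspose_eq_transpose_of_trivial]; exact hP.1
    have hS : ∀ x : Fin n → ℝ, x ≠ 0 → 0 < x ⬝ᵥ ((Aᵀ * P + P * A) *ᵥ x) := by
      intro x hx
      have := hstab x hx
      rw [hneg P, neg_mulVec, dotProduct_neg] at this
      linarith
    have hNform : ∀ x : Fin n → ℝ,
        x ⬝ᵥ ((P * B * (Bᵀ * P)) *ᵥ x) = ((Bᵀ * P) *ᵥ x) ⬝ᵥ ((Bᵀ * P) *ᵥ x) := by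
      intro x
      rw [← dot_transpose (Bᵀ * P) x ((Bᵀ * P) *ᵥ x), mulVec_mulVec]
      congr 2
      rw [transpose_mul, transpose_transpose, hPt]
    have hNq : ∀ x : Fin n → ℝ, 0 ≤ x ⬝ᵥ ((P * B * (Bᵀ * P)) *ᵥ x) := by
      intro x; rw [hNform]; exact dot_self_nonneg _
    have hShalf : ∀ x : Fin n → ℝ, x ≠ 0 →
        0 < x ⬝ᵥ (((1/2 : ℝ) • (Aᵀ * P + P * A)) *ᵥ x) := by
      intro x hx
      rw [smul_mulVec, dotProduct_smul, smul_eq_mul]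
      linarith [hS x hx]
    obtain ⟨β, hβpos, hβle⟩ := exists_beta ((1/2 : ℝ) • (Aᵀ * P + P * A)) (P * B * (Bᵀ * P))
      hShalf hNq
    refine ⟨P, (1/2 : ℝ) • (Aᵀ * P + P * A), β, hP, ?_, hβpos, ?_⟩
    · rw [posDef_iff_dotProduct_mulVec]; constructor
      · have : ((1/2 : ℝ) • (Aᵀ * P + P * A))ᴴ = (1/2 : ℝ) • (Aᵀ * P + P * A) := by
          rw [conjTranspose_eq_transpose_of_trivial, transpose_smul, transpose_add,
            transpose_mul, transpose_mul, transpose_transpose, hPt, add_comm]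
        exact this
      · intro x hx
        have := hShalf x hx
        simpa using this
    · intro z
      conv_lhs => rw [← Sum.elim_comp_inl_inr z]
      rw [key_identity A B P _ (ne_of_gt hβpos) hPt hBC]
      set x := z ∘ Sum.inl
      set u := z ∘ Sum.inr
      set w := (((2:ℝ) • (B⁻¹ * A) - β • (Bᵀ * P)) *ᵥ x + u) with hw
      have h1 : β * (x ⬝ᵥ ((P * B * (Bᵀ * P)) *ᵥ x))
          ≤ x ⬝ᵥ (((1/2 : ℝ) • (Aᵀ * P + P * A)) *ᵥ x) := hβle x
      have h2 : 0 ≤ β⁻¹ * (w ⬝ᵥ w) :=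
        mul_nonneg (inv_nonneg.mpr (le_of_lt hβpos)) (dot_self_nonneg w)
      have hexp : x ⬝ᵥ (((1/2 : ℝ) • (Aᵀ * P + P * A) - (Aᵀ * P + P * A)
            + β • (P * B * (Bᵀ * P))) *ᵥ x)
          = x ⬝ᵥ (((1/2 : ℝ) • (Aᵀ * P + P * A)) *ᵥ x)
            - x ⬝ᵥ ((Aᵀ * P + P * A) *ᵥ x)
            + β * (x ⬝ᵥ ((P * B * (Bᵀ * P)) *ᵥ x)) := by
        simp only [sub_mulVec, add_mulVec, smul_mulVec, dotProduct_add, dotProduct_sub,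
          dotProduct_smul, smul_eq_mul]
      rw [hexp]
      have h3 : x ⬝ᵥ (((1/2 : ℝ) • (Aᵀ * P + P * A)) *ᵥ x)
          = (1/2 : ℝ) * (x ⬝ᵥ ((Aᵀ * P + P * A) *ᵥ x)) := by
        rw [smul_mulVec, dotProduct_smul, smul_eq_mul]
      rw [h3] at h1 ⊢
      linarith
  · rintro ⟨P, T, β, hP, hT, hβpos, hsemi⟩
    have hPt : Pᵀ = P := by
      rw [← conjTranspose_eq_transpose_of_trivial]; exact hP.1
    refine ⟨P, hP, ?_⟩
    intro z hz
    rw [hneg P, neg_mulVec, dotProduct_neg, neg_lt_zero]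
    set u : Fin n → ℝ := -(((2:ℝ) • (B⁻¹ * A) - β • (Bᵀ * P)) *ᵥ z) with hu
    have h := hsemi (Sum.elim z u)
    rw [key_identity A B P T (ne_of_gt hβpos) hPt hBC] at h
    rw [hu, add_neg_cancel] at h
    simp only [dotProduct_zero, mul_zero, sub_zero] at h
    have hexp : z ⬝ᵥ ((T - (Aᵀ * P + P * A) + β • (P * B * (Bᵀ * P))) *ᵥ z)
        = z ⬝ᵥ (T *ᵥ z) - z ⬝ᵥ ((Aᵀ * P + P * A) *ᵥ z)
          + β * (z ⬝ᵥ ((P * B * (Bᵀ * P)) *ᵥ z)) := by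
      simp only [sub_mulVec, add_mulVec, smul_mulVec, dotProduct_add, dotProduct_sub,
        dotProduct_smul, smul_eq_mul]
    rw [hexp] at h
    have hTz : 0 < z ⬝ᵥ (T *ᵥ z) := by
      have := hT.dotProduct_mulVec_pos hz
      simpa using this
    have hNz : 0 ≤ z ⬝ᵥ ((P * B * (Bᵀ * P)) *ᵥ z) := by
      have hNform : z ⬝ᵥ ((P * B * (Bᵀ * P)) *ᵥ z)
          = ((Bᵀ * P) *ᵥ z) ⬝ᵥ ((Bᵀ * P) *ᵥ z) := by
        rw [← dot_transpose (Bᵀ * P) z ((Bᵀ * P) *ᵥ z), mulVec_mulVec]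
        congr 2
        rw [transpose_mul, transpose_transpose, hPt]
      rw [hNform]; exact dot_self_nonneg _
    nlinarith
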